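/- Let G be an infinite hyperbolic group with a fixed finite generating set whose Cayley graph is δ-hyperbolic, with word metric d and |g| = d(1,g). Let p ∈ B_n and let S ⊆ G ∖ B_n satisfy diam(S) < 2n − 2|p| − 4δ. Then ‖d̄_p − d̄_1‖_S ≤ 6δ + 2; equivalently, |(d(x,p) − |x|) − (d(y,p) − |y|)| ≤ 12δ + 4 for all x, y ∈ S. -/

import Mathlib

open scoped Classical

noncomputable section

/-- The word length of `g` with respect to a generating set `S` (using letters from
`S ∪ S⁻¹`). -/
def wordLength {G : Type} [Group G] (S : Set G) (g : G) : ℕ :=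
  sInf {n | ∃ l : List G, l.length = n ∧ (∀ x ∈ l, x ∈ S ∨ x⁻¹ ∈ S) ∧ l.prod = g}

/-- The word metric on `G` with respect to `S`. -/
def wordDist {G : Type} [Group G] (S : Set G) (x y : G) : ℕ :=
  wordLength S (x⁻¹ * y)

/-- `p 0, p 1, …, p n` is a geodesic segment for the word metric. -/
def IsGeodesicSeg {G : Type} [Group G] (S : Set G) (p : ℕ → G) (n : ℕ) : Prop :=
  ∀ i j : ℕ, i ≤ j → j ≤ n → wordDist S (p i) (p j) = j - i

/-- The Cayley graph of `G` with respect to `S` is `δ`-hyperbolic: every side of every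
geodesic triangle lies in the `δ`-neighborhood of the union of the other two sides. -/
def SlimTriangles {G : Type} [Group G] (S : Set G) (δ : ℝ) : Prop :=
  ∀ (p q r : ℕ → G) (np nq nr : ℕ),
    IsGeodesicSeg S p np → IsGeodesicSeg S q nq → IsGeodesicSeg S r nr →
    p np = q 0 → q nq = r 0 → r nr = p 0 →
    ∀ i ≤ np, ∃ j : ℕ,
      (j ≤ nq ∧ (wordDist S (p i) (q j) : ℝ) ≤ δ) ∨
      (j ≤ nr ∧ (wordDist S (p i) (r j) : ℝ) ≤ δ)

/-- A group is hyperbolic if it has a finite generating set whose Cayley graph is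
`δ`-hyperbolic for some `δ > 0`. -/
def IsHyperbolicGroup (G : Type) [Group G] : Prop :=
  ∃ S : Set G, S.Finite ∧ Subgroup.closure S = ⊤ ∧ ∃ δ : ℝ, 0 < δ ∧ SlimTriangles S δ

/-- The ball of radius `n` about the identity. -/
def ball {G : Type} [Group G] (S : Set G) (n : ℕ) : Set G :=
  {x | wordLength S x ≤ n}

/-- `x ∼ y` for the ball `B_n`: the function `d_x - d_y` is constant on `B_n`. -/
def SameAtom {G : Type} [Group G] (S : Set G) (n : ℕ) (x y : G) : Prop :=
  ∀ a ∈ ball S n, ∀ b ∈ ball S n,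
    (wordDist S x a : ℤ) - (wordDist S y a : ℤ) =
      (wordDist S x b : ℤ) - (wordDist S y b : ℤ)

/-- The atom for `B_n` containing `x`. -/
def atomOf {G : Type} [Group G] (S : Set G) (n : ℕ) (x : G) : Set G :=
  {y | SameAtom S n x y}

/-- `𝒜_n(G)`: the infinite atoms for `B_n`. -/
def InfAtoms {G : Type} [Group G] (S : Set G) (n : ℕ) : Set (Set G) :=
  {A | (∃ x, A = atomOf S n x) ∧ A.Infinite}

/-- `g` is a morphism from the atom `A₁ ∈ 𝒜_m(G)` to the atom `A₂ ∈ 𝒜_n(G)`. -/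
def IsMorphism {G : Type} [Group G] (S : Set G) (g : G) (m : ℕ) (A₁ : Set G)
    (n : ℕ) (A₂ : Set G) : Prop :=
  ((g * ·) '' A₁ = A₂) ∧
  (∀ k : ℕ, (g * ·) '' (A₁ ∩ ball S (m + k)) = A₂ ∩ ball S (n + k)) ∧
  ∀ k : ℕ, 0 < k → ∀ A' ∈ InfAtoms S (m + k), A' ⊆ A₁ →
    (g * ·) '' A' ∈ InfAtoms S (n + k) ∧ (g * ·) '' A' ⊆ A₂

/-- Two atoms have the same type if there is a morphism between them. -/
def SameType {G : Type} [Group G] (S : Set G) (m : ℕ) (A₁ : Set G) (n : ℕ)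
    (A₂ : Set G) : Prop :=
  ∃ g : G, IsMorphism S g m A₁ n A₂

/-- `N(A)`: the set of points of `B_n` at which `d̄_A` attains its minimum, i.e. the set
of nearest neighbors in `B_n` of the points of `A`. -/
def nearestSet {G : Type} [Group G] (S : Set G) (n : ℕ) (A : Set G) : Set G :=
  {p | p ∈ ball S n ∧ ∀ x ∈ A, ∀ q ∈ ball S n, wordDist S x p ≤ wordDist S x q}
section WordMetricAux

variable {G : Type} [Group G] {S : Set G}

lemma wordLength_le_length (l : List G) (hl : ∀ x ∈ l, x ∈ S ∨ x⁻¹ ∈ S) :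
    wordLength S l.prod ≤ l.length :=
  Nat.sInf_le ⟨l, rfl, hl, rfl⟩

lemma exists_min_word (hgen : Subgroup.closure S = ⊤) (g : G) :
    ∃ l : List G, l.length = wordLength S g ∧ (∀ x ∈ l, x ∈ S ∨ x⁻¹ ∈ S) ∧ l.prod = g := by
  have hg : g ∈ (Subgroup.closure S).toSubmonoid := by rw [hgen]; trivial
  rw [Subgroup.closure_toSubmonoid] at hg
  obtain ⟨l, hl, hprod⟩ := Submonoid.exists_list_of_mem_closure hg
  have hne : {m | ∃ l : List G, l.length = m ∧ (∀ x ∈ l, x ∈ S ∨ x⁻¹ ∈ S) ∧ l.prod = g}.Nonempty := by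
    refine ⟨l.length, l, rfl, ?_, hprod⟩
    intro x hx
    rcases hl x hx with h | h
    · exact Or.inl h
    · exact Or.inr (by simpa using h)
  exact Nat.sInf_mem hne

lemma wordLength_mul_le (hgen : Subgroup.closure S = ⊤) (g h : G) :
    wordLength S (g * h) ≤ wordLength S g + wordLength S h := by
  obtain ⟨l1, h1, c1, p1⟩ := exists_min_word hgen g
  obtain ⟨l2, h2, c2, p2⟩ := exists_min_word hgen h
  have := wordLength_le_length (S := S) (l1 ++ l2) (by
    intro x hx
    rcases List.mem_append.1 hx with h | h
    exacts [c1 x h, c2 x h])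
  simpa [List.prod_append, p1, p2, h1, h2] using this

lemma wordLength_inv_le (hgen : Subgroup.closure S = ⊤) (g : G) :
    wordLength S g⁻¹ ≤ wordLength S g := by
  obtain ⟨l, hlen, hcond, hprod⟩ := exists_min_word hgen g
  have hc : ∀ x ∈ (l.map fun x => x⁻¹).reverse, x ∈ S ∨ x⁻¹ ∈ S := by
    intro x hx
    simp only [List.mem_reverse, List.mem_map] at hx
    obtain ⟨y, hy, rfl⟩ := hx
    rcases hcond y hy with h | h
    · exact Or.inr (by simpa using h)
    · exact Or.inl h
  have := wordLength_le_length _ hc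
  rwa [← List.prod_inv_reverse, hprod, List.length_reverse, List.length_map, hlen] at this

lemma wordLength_inv (hgen : Subgroup.closure S = ⊤) (g : G) :
    wordLength S g⁻¹ = wordLength S g :=
  le_antisymm (wordLength_inv_le hgen g) (by simpa using wordLength_inv_le hgen g⁻¹)

lemma wordDist_comm (hgen : Subgroup.closure S = ⊤) (x y : G) :
    wordDist S x y = wordDist S y x := by
  rw [wordDist, wordDist, show y⁻¹ * x = (x⁻¹ * y)⁻¹ by group, wordLength_inv hgen]

lemma wordDist_triangle (hgen : Subgroup.closure S = ⊤) (x y z : G) :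
    wordDist S x z ≤ wordDist S x y + wordDist S y z := by
  rw [wordDist, show x⁻¹ * z = (x⁻¹ * y) * (y⁻¹ * z) by group]
  exact wordLength_mul_le hgen _ _

lemma wordDist_one (g : G) : wordDist S 1 g = wordLength S g := by
  simp [wordDist]

lemma exists_geodesic (hgen : Subgroup.closure S = ⊤) (a b : G) :
    ∃ γ : ℕ → G, IsGeodesicSeg S γ (wordDist S a b) ∧ γ 0 = a ∧ γ (wordDist S a b) = b := by
  obtain ⟨l, hlen, hcond, hprod⟩ := exists_min_word hgen (a⁻¹ * b)
  have hab : a * l.prod = b := by rw [hprod]; group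
  refine ⟨fun i => a * (l.take i).prod, ?_, by simp, ?_⟩
  · intro i j hij hjn
    show wordDist S (a * (l.take i).prod) (a * (l.take j).prod) = j - i
    have hjl : j ≤ l.length := by rw [hlen]; exact hjn
    have hil : i ≤ l.length := le_trans hij hjl
    -- upper bound
    have hsplit : (l.take i) ++ ((l.take j).drop i) = l.take j := by
      have h1 : (l.take j).take i = l.take i := by
        rw [List.take_take, min_eq_left hij]
      rw [← h1, List.take_append_drop]
    have hq : (a * (l.take i).prod)⁻¹ * (a * (l.take j).prod) = ((l.take j).drop i).prod := by
      have := congrArg List.prod hsplit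
      rw [List.prod_append] at this
      rw [← this]; group
    have hupper : wordDist S (a * (l.take i).prod) (a * (l.take j).prod) ≤ j - i := by
      rw [wordDist, hq]
      have hle := wordLength_le_length (S := S) ((l.take j).drop i) (by
        intro x hx
        exact hcond x (List.take_subset _ _ (List.drop_subset _ _ hx)))
      have hlength : ((l.take j).drop i).length = j - i := by
        rw [List.length_drop, List.length_take]
        omega
      rw [hlength] at hle
      exact hle
    -- lower bound
    have hax : wordDist S a (a * (l.take i).prod) ≤ i := by
      rw [wordDist, show a⁻¹ * (a * (l.take i).prod) = (l.take i).prod by group]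
      have hle := wordLength_le_length (S := S) (l.take i) (fun x hx => hcond x (List.take_subset _ _ hx))
      rw [List.length_take] at hle
      omega
    have hjb : wordDist S (a * (l.take j).prod) b ≤ l.length - j := by
      have hq2 : (a * (l.take j).prod)⁻¹ * b = (l.drop j).prod := by
        have := congrArg List.prod (List.take_append_drop j l)
        rw [List.prod_append] at this
        rw [← hab, ← this]; group
      rw [wordDist, hq2]
      have hle := wordLength_le_length (S := S) (l.drop j) (fun x hx => hcond x (List.drop_subset _ _ hx))
      rwa [List.length_drop] at hle
    have htri : wordDist S a b ≤ wordDist S a (a * (l.take i).prod) +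
        (wordDist S (a * (l.take i).prod) (a * (l.take j).prod) +
          wordDist S (a * (l.take j).prod) b) :=
      le_trans (wordDist_triangle hgen _ _ _)
        (by exact add_le_add le_rfl (wordDist_triangle hgen _ _ _))
    have hN : wordDist S a b = l.length := hlen.symm ▸ rfl
    omega
  · show a * (l.take (wordDist S a b)).prod = b
    have hN : wordDist S a b = l.length := hlen.symm
    rw [hN, List.take_length, hprod]
    group

end WordMetricAux

lemma key_ineq {G : Type} [Group G] {S : Set G} (hgen : Subgroup.closure S = ⊤)
    {δ : ℝ} (hδ : 0 < δ) (hhyp : SlimTriangles S δ)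
    {n : ℕ} {p : G} (hp : wordLength S p ≤ n)
    {x y : G} (hx : n < wordLength S x) (hy : n < wordLength S y)
    (hL : (wordDist S x y : ℝ) < 2 * n - 2 * (wordLength S p : ℝ) - 4 * δ) :
    (wordDist S x p : ℝ) + (wordLength S y : ℝ) ≤
      (wordDist S y p : ℝ) + (wordLength S x : ℝ) + 6 * δ + 4 := by
  have tri : ∀ a b c : G, (wordDist S a c : ℝ) ≤ wordDist S a b + wordDist S b c := by
    intro a b c; exact_mod_cast wordDist_triangle hgen a b c
  have comm : ∀ a b : G, (wordDist S a b : ℝ) = wordDist S b a := by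
    intro a b; exact_mod_cast wordDist_comm hgen a b
  have done1 : ∀ g : G, (wordDist S 1 g : ℝ) = wordLength S g := by
    intro g; exact_mod_cast wordDist_one (S := S) g
  have hlx : (n : ℝ) + 1 ≤ wordLength S x := by exact_mod_cast hx
  have hly : (n : ℝ) + 1 ≤ wordLength S y := by exact_mod_cast hy
  have hlp : (wordLength S p : ℝ) ≤ n := by exact_mod_cast hp
  have hdyp : (wordDist S y p : ℝ) = wordDist S p y := comm _ _
  have htri_xy : (wordDist S x y : ℝ) ≤ wordDist S x p + wordDist S p y := tri _ _ _
  have hlyx : (wordLength S y : ℝ) ≤ wordLength S x + wordDist S x y := by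
    have h := tri 1 x y
    rw [done1 x, done1 y] at h
    exact h
  by_cases hP : (wordDist S x y : ℝ) + wordDist S x p - wordDist S p y ≤ 2 * δ + 2
  · linarith
  push_neg at hP
  -- the interesting case
  have hceil : 1 < ⌈((wordDist S x y : ℝ) + wordDist S x p - wordDist S p y) / 2 - δ⌉₊ :=
    Nat.lt_ceil.mpr (by push_cast; linarith)
  set k : ℕ := ⌈((wordDist S x y : ℝ) + wordDist S x p - wordDist S p y) / 2 - δ⌉₊ - 1 with hkdef
  have hkcast : (k : ℝ) =
      (⌈((wordDist S x y : ℝ) + wordDist S x p - wordDist S p y) / 2 - δ⌉₊ : ℝ) - 1 := by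
    rw [hkdef, Nat.cast_sub hceil.le, Nat.cast_one]
  have hk1 : (k : ℝ) < ((wordDist S x y : ℝ) + wordDist S x p - wordDist S p y) / 2 - δ := by
    have h2 := Nat.ceil_lt_add_one
      (show (0 : ℝ) ≤ ((wordDist S x y : ℝ) + wordDist S x p - wordDist S p y) / 2 - δ by
        linarith)
    linarith [hkcast]
  have hk2 : ((wordDist S x y : ℝ) + wordDist S x p - wordDist S p y) / 2 - δ - 1 ≤ k := by
    have := Nat.le_ceil (((wordDist S x y : ℝ) + wordDist S x p - wordDist S p y) / 2 - δ)
    linarith [hkcast]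
  have hkd : k ≤ wordDist S x p := by
    have hkr : (k : ℝ) < wordDist S x p := by linarith
    exact (Nat.cast_lt.mp hkr).le
  obtain ⟨α, hα, hα0, hαN⟩ := exists_geodesic hgen x p
  obtain ⟨β, hβ, hβ0, hβN⟩ := exists_geodesic hgen p y
  obtain ⟨σ, hσ, hσ0, hσN⟩ := exists_geodesic hgen y x
  obtain ⟨γ₁, hγ₁, hγ₁0, hγ₁N⟩ := exists_geodesic hgen p 1
  obtain ⟨γ₂, hγ₂, hγ₂0, hγ₂N⟩ := exists_geodesic hgen 1 x
  have geo : ∀ (γ : ℕ → G) (N : ℕ), IsGeodesicSeg S γ N → ∀ i j : ℕ, i ≤ j → j ≤ N →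
      (wordDist S (γ i) (γ j) : ℝ) = (j : ℝ) - i := by
    intro γ N hg i j hij hjN
    rw [hg i j hij hjN, Nat.cast_sub hij]
  have gαxk : (wordDist S x (α k) : ℝ) = k := by
    have h := geo α _ hα 0 k (Nat.zero_le _) hkd
    rwa [hα0, Nat.cast_zero, sub_zero] at h
  have gαkp : (wordDist S (α k) p : ℝ) = (wordDist S x p : ℝ) - k := by
    have h := geo α _ hα k _ hkd le_rfl
    rwa [hαN] at h
  obtain ⟨j₁, hj₁⟩ := hhyp α β σ _ _ _ hα hβ hσ (hαN.trans hβ0.symm) (hβN.trans hσ0.symm)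
    (hσN.trans hα0.symm) k hkd
  rcases hj₁ with ⟨hj₁le, hj₁d⟩ | ⟨hj₁le, hj₁d⟩
  · -- close to the side [p, y] : contradiction with k < P - δ
    exfalso
    have gpv : (wordDist S p (β j₁) : ℝ) = j₁ := by
      have h := geo β _ hβ 0 j₁ (Nat.zero_le _) hj₁le
      rwa [hβ0, Nat.cast_zero, sub_zero] at h
    have gvy : (wordDist S (β j₁) y : ℝ) = (wordDist S p y : ℝ) - j₁ := by
      have h := geo β _ hβ j₁ _ hj₁le le_rfl
      rwa [hβN] at h
    have t1 : (wordDist S p (α k) : ℝ) ≤ wordDist S p (β j₁) + wordDist S (β j₁) (α k) :=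
      tri _ _ _
    have t1' : (wordDist S (β j₁) (α k) : ℝ) = wordDist S (α k) (β j₁) := comm _ _
    have t2 : (wordDist S x y : ℝ) ≤ wordDist S x (α k) + wordDist S (α k) y := tri _ _ _
    have t3 : (wordDist S (α k) y : ℝ) ≤ wordDist S (α k) (β j₁) + wordDist S (β j₁) y :=
      tri _ _ _
    have t4 : (wordDist S p (α k) : ℝ) = wordDist S (α k) p := comm _ _
    linarith
  · -- close to the side [y, x] at w := σ j₁
    have gyw : (wordDist S y (σ j₁) : ℝ) = j₁ := by
      have h := geo σ _ hσ 0 j₁ (Nat.zero_le _) hj₁le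
      rwa [hσ0, Nat.cast_zero, sub_zero] at h
    have gwx : (wordDist S (σ j₁) x : ℝ) = (wordDist S y x : ℝ) - j₁ := by
      have h := geo σ _ hσ j₁ _ hj₁le le_rfl
      rwa [hσN] at h
    have hyx : (wordDist S y x : ℝ) = wordDist S x y := comm _ _
    have cB1 : (wordDist S 1 y : ℝ) ≤ wordDist S 1 (σ j₁) + wordDist S (σ j₁) y := tri _ _ _
    have cB2 : (wordDist S 1 x : ℝ) ≤ wordDist S 1 (σ j₁) + wordDist S (σ j₁) x := tri _ _ _
    have cB3 : (wordDist S (σ j₁) y : ℝ) = j₁ := by rw [comm]; exact gyw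
    have d1w : (wordDist S 1 (σ j₁) : ℝ) = wordDist S (σ j₁) 1 := comm _ _
    have a3 : (wordDist S (σ j₁) (α k) : ℝ) = wordDist S (α k) (σ j₁) := comm _ _
    have a2 : (wordDist S (σ j₁) 1 : ℝ) ≤ wordDist S (σ j₁) (α k) + wordDist S (α k) 1 :=
      tri _ _ _
    obtain ⟨j₂, hj₂⟩ := hhyp α γ₁ γ₂ _ _ _ hα hγ₁ hγ₂ (hαN.trans hγ₁0.symm)
      (hγ₁N.trans hγ₂0.symm) (hγ₂N.trans hα0.symm) k hkd
    rcases hj₂ with ⟨hj₂le, hj₂d⟩ | ⟨hj₂le, hj₂d⟩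
    · -- close to [p, 1] : contradiction, α k is too far from 1
      exfalso
      have gz1 : (wordDist S (γ₁ j₂) 1 : ℝ) = (wordDist S p 1 : ℝ) - j₂ := by
        have h := geo γ₁ _ hγ₁ j₂ _ hj₂le le_rfl
        rwa [hγ₁N] at h
      have hdp1 : (wordDist S p 1 : ℝ) = wordLength S p := by rw [comm]; exact done1 p
      have a1 : (wordDist S (α k) 1 : ℝ) ≤ wordDist S (α k) (γ₁ j₂) + wordDist S (γ₁ j₂) 1 :=
        tri _ _ _
      have hj₂0 : (0 : ℝ) ≤ j₂ := Nat.cast_nonneg _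
      linarith [done1 x, done1 y]
    · -- close to [1, x] at u := γ₂ j₂
      have g1u : (wordDist S 1 (γ₂ j₂) : ℝ) = j₂ := by
        have h := geo γ₂ _ hγ₂ 0 j₂ (Nat.zero_le _) hj₂le
        rwa [hγ₂0, Nat.cast_zero, sub_zero] at h
      have gux : (wordDist S (γ₂ j₂) x : ℝ) = (wordDist S 1 x : ℝ) - j₂ := by
        have h := geo γ₂ _ hγ₂ j₂ _ hj₂le le_rfl
        rwa [hγ₂N] at h
      have b1 : (wordDist S (α k) x : ℝ) ≤ wordDist S (α k) (γ₂ j₂) + wordDist S (γ₂ j₂) x :=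
        tri _ _ _
      have b2 : (wordDist S (α k) x : ℝ) = wordDist S x (α k) := comm _ _
      have b3 : (wordDist S (α k) 1 : ℝ) ≤ wordDist S (α k) (γ₂ j₂) + wordDist S (γ₂ j₂) 1 :=
        tri _ _ _
      have b3' : (wordDist S (γ₂ j₂) 1 : ℝ) = wordDist S 1 (γ₂ j₂) := comm _ _
      have b5 : (wordDist S (α k) x : ℝ) ≤ wordDist S (α k) (σ j₁) + wordDist S (σ j₁) x :=
        tri _ _ _
      linarith [done1 x, done1 y]

/-- Let `G` be an infinite hyperbolic group whose Cayley graph (for the fixed finite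
generating set `S`) is `δ`-hyperbolic.  If `p ∈ B_n` and `T ⊆ G ∖ B_n` has diameter
less than `2n − 2|p| − 4δ`, then `‖d̄_p − d̄_1‖_T ≤ 6δ + 2`, i.e.
`|(d(x,p) − |x|) − (d(y,p) − |y|)| ≤ 12δ + 4` for all `x, y ∈ T`. -/
theorem distance_function_not_changing (G : Type) [Group G] [Infinite G]
    (S : Set G) (hSfin : S.Finite) (hgen : Subgroup.closure S = ⊤)
    (δ : ℝ) (hδ : 0 < δ) (hhyp : SlimTriangles S δ)
    (n : ℕ) (p : G) (hp : p ∈ ball S n)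
    (T : Set G) (hT : ∀ x ∈ T, x ∉ ball S n)
    (hdiam : ∀ x ∈ T, ∀ y ∈ T,
      (wordDist S x y : ℝ) < 2 * n - 2 * (wordLength S p : ℝ) - 4 * δ) :
    ∀ x ∈ T, ∀ y ∈ T,
      |((wordDist S x p : ℝ) - (wordLength S x : ℝ)) -
        ((wordDist S y p : ℝ) - (wordLength S y : ℝ))| ≤ 12 * δ + 4 := by
  intro x hx y hy
  have hx' : n < wordLength S x := Nat.lt_of_not_le (hT x hx)
  have hy' : n < wordLength S y := Nat.lt_of_not_le (hT y hy)
  have h1 := key_ineq hgen hδ hhyp hp hx' hy' (hdiam x hx y hy)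
  have h2 := key_ineq hgen hδ hhyp hp hy' hx' (hdiam y hy x hx)
  rw [abs_le]
  constructor <;> linarith

end
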